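/- Suppose α : H → H is an R-algebra homomorphism with α(h_s) = −q_s·h_s⁻¹ for all s ∈ S. Then for every h ∈ H one has, in H ⊗_R H: Σ_{w∈W} (−1)^{ℓ(w)} (h·h_w) ⊗ h_w⁻¹ = Σ_{w∈W} (−1)^{ℓ(w)} h_w ⊗ (h_w⁻¹·α(h)). Equivalently, with ξ := Σ_{w∈W} (−1)^{ℓ(w)} h_w ⊗ h_w⁻¹, left multiplication by h on the first tensor factor of ξ coincides with right multiplication by α(h) on the second tensor factor of ξ (so the sub-bimodule ξ·H of H ⊗_R H is isomorphic, as an (H,H)-bimodule, to H with left action twisted by α). -/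

import Mathlib

open scoped TensorProduct

/-- Remark 18 of [Cabanes, On Okuyama's theorems about
Alvis-Curtis duality].  If `α` is an `R`-algebra endomorphism of the
Iwahori–Hecke algebra `H` with `α(h_s) = -q_s h_s⁻¹` for all `s ∈ S`, then for
every `h ∈ H` one has `h·ξ = ξ·α(h)` where `ξ = Σ_w (-1)^{ℓ(w)} h_w ⊗ h_w⁻¹`,
i.e. left multiplication by `h` on the first factors of `ξ` agrees with right
multiplication by `α(h)` on the second factors. -/
theorem okuyama_statement19
    {B : Type} {W : Type} [Group W] [Fintype W] {M : CoxeterMatrix B}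
    (cs : CoxeterSystem M W)
    (R : Type) [CommRing R] (H : Type) [Ring H] [Algebra R H]
    (q : B → Rˣ)
    (hq : ∀ s t : B, IsConj (cs.simple s) (cs.simple t) → q s = q t)
    (h : W → H) (bW : Module.Basis W R H) (hbW : ∀ w : W, bW w = h w)
    (h1 : h 1 = 1)
    (hmul : ∀ w w' : W, cs.length (w * w') = cs.length w + cs.length w' →
        h w * h w' = h (w * w'))
    (hquad : ∀ s : B, h (cs.simple s) * h (cs.simple s) =
        ((q s : R) - 1) • h (cs.simple s) + (q s : R) • (1 : H))
    (hunit : ∀ w : W, IsUnit (h w))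
    (α : H →ₐ[R] H)
    (hα : ∀ s : B, α (h (cs.simple s)) = -((q s : R) • Ring.inverse (h (cs.simple s)))) :
    ∀ hh : H,
      ∑ w : W, ((-1 : ℤ) ^ cs.length w) • ((hh * h w) ⊗ₜ[R] Ring.inverse (h w))
        = ∑ w : W, ((-1 : ℤ) ^ cs.length w) • (h w ⊗ₜ[R] (Ring.inverse (h w) * α hh)) := by
  classical
  -- basic invertibility facts
  have hinv_mul : ∀ w : W, Ring.inverse (h w) * h w = 1 :=
    fun w => Ring.inverse_mul_cancel _ (hunit w)
  have hmul_inv : ∀ w : W, h w * Ring.inverse (h w) = 1 :=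
    fun w => Ring.mul_inverse_cancel _ (hunit w)
  have invEq : ∀ (x : W) (b : H), h x * b = 1 → Ring.inverse (h x) = b := by
    intro x b e
    calc Ring.inverse (h x) = Ring.inverse (h x) * (h x * b) := by rw [e, mul_one]
      _ = (Ring.inverse (h x) * h x) * b := by rw [mul_assoc]
      _ = b := by rw [hinv_mul, one_mul]
  -- the Hecke relation in inverse form
  have hs_decomp : ∀ i : B, h (cs.simple i) =
      ((q i : R) - 1) • (1 : H) + (q i : R) • Ring.inverse (h (cs.simple i)) := by
    intro i
    have e := congrArg (fun x => x * Ring.inverse (h (cs.simple i))) (hquad i)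
    simp only [mul_assoc, hmul_inv, mul_one, add_mul, smul_mul_assoc, one_mul] at e
    exact e
  have hαs : ∀ i : B, α (h (cs.simple i)) = ((q i : R) - 1) • (1 : H) - h (cs.simple i) := by
    intro i
    have d := hs_decomp i
    have e : ((q i : R) - 1) • (1 : H) - h (cs.simple i)
        = -((q i : R) • Ring.inverse (h (cs.simple i))) := by
      conv_lhs => rw [d]
      abel
    rw [hα i, ← e]
  -- facts for a length-increasing simple multiplication
  have hsw_mul : ∀ (i : B) (w : W), cs.length (cs.simple i * w) = cs.length w + 1 →
      h (cs.simple i) * h w = h (cs.simple i * w) := by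
    intro i w hlw
    exact hmul _ _ (by rw [hlw, cs.length_simple]; omega)
  have hinv_sw : ∀ (i : B) (w : W), cs.length (cs.simple i * w) = cs.length w + 1 →
      Ring.inverse (h (cs.simple i * w))
        = Ring.inverse (h w) * Ring.inverse (h (cs.simple i)) := by
    intro i w hlw
    refine invEq _ _ ?_
    rw [← hsw_mul i w hlw, mul_assoc, ← mul_assoc (h w), hmul_inv, one_mul, hmul_inv]
  -- the pairwise tensor identity
  have pair : ∀ (i : B) (w : W), cs.length (cs.simple i * w) = cs.length w + 1 →
      ((h (cs.simple i) * h w) ⊗ₜ[R] Ring.inverse (h w)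
        - h w ⊗ₜ[R] (Ring.inverse (h w) * α (h (cs.simple i))))
      = ((h (cs.simple i) * h (cs.simple i * w)) ⊗ₜ[R] Ring.inverse (h (cs.simple i * w))
        - h (cs.simple i * w) ⊗ₜ[R] (Ring.inverse (h (cs.simple i * w)) * α (h (cs.simple i)))) := by
    intro i w hlw
    have e1 : h (cs.simple i) * h w = h (cs.simple i * w) := hsw_mul i w hlw
    have e2 : Ring.inverse (h (cs.simple i * w))
        = Ring.inverse (h w) * Ring.inverse (h (cs.simple i)) := hinv_sw i w hlw
    have e3 : h (cs.simple i) * h (cs.simple i * w)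
        = ((q i : R) - 1) • h (cs.simple i * w) + (q i : R) • h w := by
      rw [← e1, ← mul_assoc, hquad i, add_mul, smul_mul_assoc, smul_mul_assoc, one_mul, e1]
    have e4 : Ring.inverse (h w) * α (h (cs.simple i))
        = -((q i : R) • Ring.inverse (h (cs.simple i * w))) := by
      have d := hs_decomp i
      have e : ((q i : R) - 1) • (1 : H) - h (cs.simple i)
          = -((q i : R) • Ring.inverse (h (cs.simple i))) := by
        conv_lhs => rw [d]
        abel
      rw [hαs i, e, mul_neg, mul_smul_comm, ← e2]
    have e5a : Ring.inverse (h (cs.simple i * w)) * h (cs.simple i)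
        = Ring.inverse (h w) := by
      rw [e2, mul_assoc, hinv_mul, mul_one]
    have e5 : Ring.inverse (h (cs.simple i * w)) * α (h (cs.simple i))
        = ((q i : R) - 1) • Ring.inverse (h (cs.simple i * w)) - Ring.inverse (h w) := by
      rw [hαs i, mul_sub, mul_smul_comm, mul_one, e5a]
    rw [e1, e3, e4, e5]
    simp only [TensorProduct.add_tmul, TensorProduct.tmul_sub, TensorProduct.tmul_neg,
      TensorProduct.smul_tmul', TensorProduct.tmul_smul]
    abel
  -- the key identity for a simple reflection
  have key : ∀ i : B,
      (∑ w : W, ((-1 : ℤ) ^ cs.length w) •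
          ((h (cs.simple i) * h w) ⊗ₜ[R] Ring.inverse (h w)))
        = ∑ w : W, ((-1 : ℤ) ^ cs.length w) •
          (h w ⊗ₜ[R] (Ring.inverse (h w) * α (h (cs.simple i)))) := by
    intro i
    rw [← sub_eq_zero, ← Finset.sum_sub_distrib]
    have pairsum : ∀ w : W, cs.length (cs.simple i * w) = cs.length w + 1 →
        (((-1 : ℤ) ^ cs.length w) • ((h (cs.simple i) * h w) ⊗ₜ[R] Ring.inverse (h w))
          - ((-1 : ℤ) ^ cs.length w) •
            (h w ⊗ₜ[R] (Ring.inverse (h w) * α (h (cs.simple i)))))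
        + (((-1 : ℤ) ^ cs.length (cs.simple i * w)) •
            ((h (cs.simple i) * h (cs.simple i * w)) ⊗ₜ[R] Ring.inverse (h (cs.simple i * w)))
          - ((-1 : ℤ) ^ cs.length (cs.simple i * w)) •
            (h (cs.simple i * w) ⊗ₜ[R]
              (Ring.inverse (h (cs.simple i * w)) * α (h (cs.simple i))))) = 0 := by
      intro w hlw
      have hε : ((-1 : ℤ) ^ cs.length (cs.simple i * w)) = -((-1 : ℤ) ^ cs.length w) := by
        rw [hlw, pow_succ]; ring
      rw [← smul_sub, ← smul_sub, hε, pair i w hlw, neg_smul, add_neg_cancel]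
    refine Finset.sum_ninvolution (fun w => cs.simple i * w) ?_ ?_ (fun w => Finset.mem_univ _)
      (fun w => cs.simple_mul_simple_cancel_left i) 
    · intro w
      rcases cs.length_simple_mul w i with hlw | hlw
      · exact pairsum w hlw
      · rw [add_comm]
        have h2 : cs.length (cs.simple i * (cs.simple i * w))
            = cs.length (cs.simple i * w) + 1 := by
          rw [cs.simple_mul_simple_cancel_left]; omega
        have := pairsum (cs.simple i * w) h2
        rwa [cs.simple_mul_simple_cancel_left] at this
    · intro w _
      intro hne
      have heq : cs.simple i = 1 := by
        have h' : cs.simple i * w = 1 * w := by rw [one_mul]; exact hne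
        exact mul_right_cancel h'
      have h1' := cs.length_simple i
      rw [heq, cs.length_one] at h1'
      exact one_ne_zero h1'.symm
  -- multiplicativity of the statement, via the tensor bimodule structure
  set ξ : H ⊗[R] H :=
    ∑ w : W, ((-1 : ℤ) ^ cs.length w) • (h w ⊗ₜ[R] Ring.inverse (h w)) with hξ
  have hF : ∀ a : H, (LinearMap.rTensor H (LinearMap.mulLeft R a)) ξ
      = ∑ w : W, ((-1 : ℤ) ^ cs.length w) • ((a * h w) ⊗ₜ[R] Ring.inverse (h w)) := by
    intro a
    rw [hξ, map_sum]
    refine Finset.sum_congr rfl fun w _ => ?_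
    rw [map_zsmul, LinearMap.rTensor_tmul, LinearMap.mulLeft_apply]
  have hG : ∀ a : H, (LinearMap.lTensor H (LinearMap.mulRight R (α a))) ξ
      = ∑ w : W, ((-1 : ℤ) ^ cs.length w) •
          (h w ⊗ₜ[R] (Ring.inverse (h w) * α a)) := by
    intro a
    rw [hξ, map_sum]
    refine Finset.sum_congr rfl fun w _ => ?_
    rw [map_zsmul, LinearMap.lTensor_tmul, LinearMap.mulRight_apply]
  -- the predicate
  set P : H → Prop := fun a =>
    (∑ w : W, ((-1 : ℤ) ^ cs.length w) • ((a * h w) ⊗ₜ[R] Ring.inverse (h w)))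
      = ∑ w : W, ((-1 : ℤ) ^ cs.length w) •
          (h w ⊗ₜ[R] (Ring.inverse (h w) * α a)) with hP
  have Pmap : ∀ a : H, P a ↔ (LinearMap.rTensor H (LinearMap.mulLeft R a)) ξ
      = (LinearMap.lTensor H (LinearMap.mulRight R (α a))) ξ := by
    intro a; rw [hP, hF, hG]
  have Pone : P 1 := by
    rw [Pmap]
    simp [LinearMap.mulLeft_one, LinearMap.mulRight_one]
  have Pmul : ∀ a b : H, P a → P b → P (a * b) := by
    intro a b ha hb
    rw [Pmap] at ha hb ⊢
    have comm : ∀ (f g : H →ₗ[R] H) (z : H ⊗[R] H),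
        LinearMap.rTensor H f (LinearMap.lTensor H g z)
          = LinearMap.lTensor H g (LinearMap.rTensor H f z) := by
      intro f g z
      rw [← LinearMap.comp_apply, ← LinearMap.comp_apply,
        LinearMap.rTensor_comp_lTensor, LinearMap.lTensor_comp_rTensor]
    rw [LinearMap.mulLeft_mul, LinearMap.rTensor_comp, LinearMap.comp_apply, hb, comm, ha,
      map_mul, LinearMap.mulRight_mul, LinearMap.lTensor_comp, LinearMap.comp_apply]
  have Pzero : P 0 := by
    rw [Pmap]
    have eL : LinearMap.mulLeft R (0 : H) = 0 := by ext x; simp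
    have eR : LinearMap.mulRight R (α 0) = 0 := by ext x; simp
    rw [eL, eR, LinearMap.rTensor_zero, LinearMap.lTensor_zero]
  have Padd : ∀ a b : H, P a → P b → P (a + b) := by
    intro a b ha hb
    rw [Pmap] at ha hb ⊢
    have eL : LinearMap.mulLeft R (a + b) = LinearMap.mulLeft R a + LinearMap.mulLeft R b := by
      ext x; simp [add_mul]
    have eR : LinearMap.mulRight R (α a + α b)
        = LinearMap.mulRight R (α a) + LinearMap.mulRight R (α b) := by
      ext x; simp [mul_add]
    rw [eL, map_add, eR, LinearMap.rTensor_add, LinearMap.lTensor_add,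
      LinearMap.add_apply, LinearMap.add_apply, ha, hb]
  have Palg : ∀ r : R, P (algebraMap R H r) := by
    intro r
    rw [hP]
    refine Finset.sum_congr rfl fun w _ => ?_
    congr 1
    rw [α.commutes r]
    calc (algebraMap R H r * h w) ⊗ₜ[R] Ring.inverse (h w)
        = (r • h w) ⊗ₜ[R] Ring.inverse (h w) := by rw [Algebra.smul_def]
      _ = h w ⊗ₜ[R] (r • Ring.inverse (h w)) := by
          rw [TensorProduct.smul_tmul]
      _ = h w ⊗ₜ[R] (Ring.inverse (h w) * algebraMap R H r) := by
          rw [Algebra.smul_def, Algebra.commutes]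
  have Psmul : ∀ (r : R) (a : H), P a → P (r • a) := by
    intro r a ha
    rw [Algebra.smul_def]
    exact Pmul _ _ (Palg r) ha
  -- P holds for all basis elements h w, by induction on length
  have Pw : ∀ (n : ℕ) (w : W), cs.length w = n → P (h w) := by
    intro n
    induction n using Nat.strong_induction_on with
    | _ n ih =>
      intro w hwn
      by_cases hw1 : w = 1
      · subst hw1; rw [h1]; exact Pone
      · obtain ⟨i, hi⟩ := cs.exists_leftDescent_of_ne_one hw1
        have hlt : cs.length (cs.simple i * w) < cs.length w := hi
        have hcan : cs.simple i * (cs.simple i * w) = w :=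
          cs.simple_mul_simple_cancel_left i
        have hlen : cs.length (cs.simple i * (cs.simple i * w))
            = cs.length (cs.simple i * w) + 1 := by
          rw [hcan]
          have := (cs.isLeftDescent_iff).mp hi
          omega
        have e : h w = h (cs.simple i) * h (cs.simple i * w) := by
          rw [hsw_mul i (cs.simple i * w) hlen, hcan]
        rw [e]
        refine Pmul _ _ ?_ (ih (cs.length (cs.simple i * w)) (by omega) _ rfl)
        rw [hP]
        exact key i
  -- conclude for arbitrary hh via the basis
  intro hh
  have hrep : (∑ w : W, bW.repr hh w • h w) = hh := by
    conv_rhs => rw [← bW.sum_repr hh]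
    exact Finset.sum_congr rfl fun w _ => by rw [hbW]
  have : P hh := by
    rw [← hrep]
    refine Finset.sum_induction _ P Padd Pzero fun w _ => ?_
    exact Psmul _ _ (Pw (cs.length w) w rfl)
  exact this
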